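/- arXiv:2207.08892 — 3 statements merged into one kernel-verified Lean document; each statement's English description precedes it below -/
import Mathlib

section
/- In the discrete-time optimal control setup, the reduced cost Φ is differentiable on (ℝᵐ)^T, and for every control sequence u = (u_0,…,u_{T−1}) and every t ∈ {0,…,T−1}, the partial gradient of Φ with respect to the block variable u_t equals ∇_u c_t(x_t(u), u_t) + (D_u f_t(x_t(u), u_t))ᵀ λ_{t+1}(u), where λ(u) is the costate sequence of u and D_u f_t denotes the Jacobian of f_t in its control argument. (This identifies the correction term Δu_t of the distributed shooting algorithm with the exact gradient of the robot's reduced objective.) -/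
/-!
STATEMENT 0: In the discrete-time optimal control setup, the reduced cost Φ is
differentiable on (ℝᵐ)^T, and for every control sequence u and every t ∈ {0,…,T−1},
the partial gradient of Φ with respect to the block variable u_t equals
∇_u c_t(x_t(u), u_t) + (D_u f_t(x_t(u), u_t))ᵀ λ_{t+1}(u).
-/

section Helpers

open InnerProductSpace

variable {E F : Type*} [NormedAddCommGroup E] [InnerProductSpace ℝ E] [CompleteSpace E]
  [NormedAddCommGroup F] [InnerProductSpace ℝ F] [CompleteSpace F]

lemma inner_grad_aux (g : E → ℝ) (x v : E) : ⟪gradient g x, v⟫_ℝ = fderiv ℝ g x v := by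
  simp [gradient, InnerProductSpace.toDual_symm_apply]

lemma grad_add_aux {g1 g2 : E → ℝ} {x : E} (h1 : DifferentiableAt ℝ g1 x)
    (h2 : DifferentiableAt ℝ g2 x) :
    gradient (fun y => g1 y + g2 y) x = gradient g1 x + gradient g2 x := by
  apply ext_inner_right ℝ
  intro v
  rw [inner_grad_aux, inner_add_left, inner_grad_aux, inner_grad_aux, fderiv_fun_add h1 h2]
  simp

lemma grad_const_add_aux (C : ℝ) (g : E → ℝ) (x : E) :
    gradient (fun y => C + g y) x = gradient g x := by
  apply ext_inner_right ℝ
  intro v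
  rw [inner_grad_aux, inner_grad_aux, fderiv_const_add]

lemma grad_comp_aux {F' : E → F} {g : F → ℝ} {x : E} (hF : DifferentiableAt ℝ F' x)
    (hg : DifferentiableAt ℝ g (F' x)) :
    gradient (fun y => g (F' y)) x
      = ContinuousLinearMap.adjoint (fderiv ℝ F' x) (gradient g (F' x)) := by
  apply ext_inner_right ℝ
  intro v
  rw [inner_grad_aux, ContinuousLinearMap.adjoint_inner_left, inner_grad_aux]
  rw [show (fun y => g (F' y)) = g ∘ F' from rfl, fderiv_comp x hg hF]
  rfl

/-- The cost-to-go value function for fixed controls `u : ℕ → U`. -/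
noncomputable def ctgV {E U : Type*} (T : ℕ) (f : ℕ → E → U → E) (c : ℕ → E → U → ℝ)
    (h : E → ℝ) (u : ℕ → U) : ℕ → E → ℝ
  | s, y =>
    if _hs : s < T then c s y (u s) + ctgV T f c h u (s + 1) (f s y (u s)) else h y
  termination_by s _ => T - s
  decreasing_by omega

lemma ctgV_of_lt {E U : Type*} {T : ℕ} {f : ℕ → E → U → E} {c : ℕ → E → U → ℝ}
    {h : E → ℝ} {u : ℕ → U} {s : ℕ} (hs : s < T) (y : E) :
    ctgV T f c h u s y = c s y (u s) + ctgV T f c h u (s + 1) (f s y (u s)) := by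
  rw [ctgV, dif_pos hs]

lemma ctgV_of_ge {E U : Type*} {T : ℕ} {f : ℕ → E → U → E} {c : ℕ → E → U → ℝ}
    {h : E → ℝ} {u : ℕ → U} {s : ℕ} (hs : ¬ s < T) (y : E) :
    ctgV T f c h u s y = h y := by
  rw [ctgV, dif_neg hs]

end Helpers

theorem reduced_cost_block_gradient
    (n m T : ℕ) (hT : 1 ≤ T)
    (f : ℕ → EuclideanSpace ℝ (Fin n) → EuclideanSpace ℝ (Fin m) → EuclideanSpace ℝ (Fin n))
    (c : ℕ → EuclideanSpace ℝ (Fin n) → EuclideanSpace ℝ (Fin m) → ℝ)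
    (h : EuclideanSpace ℝ (Fin n) → ℝ)
    (x0 : EuclideanSpace ℝ (Fin n))
    -- continuous differentiability of the data
    (hf : ∀ t < T, ContDiff ℝ 1
      (fun p : EuclideanSpace ℝ (Fin n) × EuclideanSpace ℝ (Fin m) => f t p.1 p.2))
    (hc : ∀ t < T, ContDiff ℝ 1
      (fun p : EuclideanSpace ℝ (Fin n) × EuclideanSpace ℝ (Fin m) => c t p.1 p.2))
    (hh : ContDiff ℝ 1 h)
    -- the rollout x(u)
    (x : (Fin T → EuclideanSpace ℝ (Fin m)) → ℕ → EuclideanSpace ℝ (Fin n))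
    (hx0 : ∀ u, x u 0 = x0)
    (hxrec : ∀ u, ∀ t : Fin T, x u ((t : ℕ) + 1) = f t (x u t) (u t))
    -- the reduced cost Φ
    (Φ : (Fin T → EuclideanSpace ℝ (Fin m)) → ℝ)
    (hΦ : ∀ u, Φ u = (∑ t : Fin T, c t (x u t) (u t)) + h (x u T))
    -- the costate sequence λ(u), defined backward
    (lam : (Fin T → EuclideanSpace ℝ (Fin m)) → ℕ → EuclideanSpace ℝ (Fin n))
    (hlamT : ∀ u, lam u T = gradient h (x u T))
    (hlamrec : ∀ u, ∀ t : Fin T, 1 ≤ (t : ℕ) →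
      lam u t = gradient (fun y => c t y (u t)) (x u t)
        + (ContinuousLinearMap.adjoint
            (fderiv ℝ (fun y => f t y (u t)) (x u t))) (lam u ((t : ℕ) + 1))) :
    Differentiable ℝ Φ ∧
      ∀ (u : Fin T → EuclideanSpace ℝ (Fin m)) (t : Fin T),
        gradient (fun v => Φ (Function.update u t v)) (u t)
          = gradient (fun v => c t (x u t) v) (u t)
            + (ContinuousLinearMap.adjoint
                (fderiv ℝ (fun v => f t (x u t) v) (u t))) (lam u ((t : ℕ) + 1)) := by
  classical
  -- projections are differentiable
  have hproj : ∀ i : Fin T, Differentiable ℝ (fun u : Fin T → EuclideanSpace ℝ (Fin m) => u i) := by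
    intro i
    exact (ContinuousLinearMap.proj (R := ℝ) (φ := fun _ : Fin T => EuclideanSpace ℝ (Fin m)) i).differentiable
  -- differentiability of the rollout
  have hxdiff : ∀ s, s ≤ T → Differentiable ℝ (fun u : Fin T → EuclideanSpace ℝ (Fin m) => x u s) := by
    intro s
    induction s with
    | zero =>
      intro _
      have : (fun u : Fin T → EuclideanSpace ℝ (Fin m) => x u 0) = fun _ => x0 := funext fun u => hx0 u
      rw [this]; exact differentiable_const x0
    | succ s ih =>
      intro hsT
      have hs : s < T := hsT
      have heq : (fun u : Fin T → EuclideanSpace ℝ (Fin m) => x u (s+1))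
          = fun u => f s (x u s) (u ⟨s, hs⟩) := by
        funext u
        simpa using hxrec u ⟨s, hs⟩
      rw [heq]
      exact ((hf s hs).differentiable one_ne_zero).comp
        ((ih hs.le).prodMk (hproj ⟨s, hs⟩))
  -- differentiability of Φ
  have hΦdiff : Differentiable ℝ Φ := by
    have hΦe : Φ = fun u => (∑ t : Fin T, c t (x u t) (u t)) + h (x u T) := funext hΦ
    rw [hΦe]
    apply Differentiable.add
    · apply Differentiable.fun_sum
      intro t _
      exact ((hc t t.isLt).differentiable one_ne_zero).comp
        ((hxdiff t t.isLt.le).prodMk (hproj t))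
    · exact (hh.differentiable one_ne_zero).comp (hxdiff T le_rfl)
  refine ⟨hΦdiff, ?_⟩
  intro u t
  -- extended control sequence
  set uN : ℕ → EuclideanSpace ℝ (Fin m) := fun r => if hr : r < T then u ⟨r, hr⟩ else 0 with huNdef
  have huN : ∀ (r : ℕ) (hr : r < T), uN r = u ⟨r, hr⟩ := by
    intro r hr; rw [huNdef]; exact dif_pos hr
  -- the value function
  set V : ℕ → EuclideanSpace ℝ (Fin n) → ℝ := ctgV T f c h uN with hVdef
  have hVlt : ∀ (s : ℕ), s < T → ∀ y, V s y = c s y (uN s) + V (s+1) (f s y (uN s)) := by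
    intro s hs y; rw [hVdef]; exact ctgV_of_lt hs y
  have hVge : ∀ (s : ℕ), ¬ s < T → ∀ y, V s y = h y := by
    intro s hs y; rw [hVdef]; exact ctgV_of_ge hs y
  -- differentiability of the value function
  have hVdiff : ∀ k s, T ≤ s + k → Differentiable ℝ (V s) := by
    intro k
    induction k with
    | zero =>
      intro s hs
      have h1 : ¬ s < T := by omega
      have : V s = h := funext fun y => hVge s h1 y
      rw [this]; exact hh.differentiable one_ne_zero
    | succ k ih =>
      intro s hs
      by_cases h1 : s < T
      · have heq : V s = fun y => c s y (uN s) + V (s+1) (f s y (uN s)) :=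
          funext fun y => hVlt s h1 y
        rw [heq]
        have hc' : Differentiable ℝ (fun y : EuclideanSpace ℝ (Fin n) => c s y (uN s)) :=
          ((hc s h1).differentiable one_ne_zero).comp
            (differentiable_id.prodMk (differentiable_const _))
        have hf' : Differentiable ℝ (fun y : EuclideanSpace ℝ (Fin n) => f s y (uN s)) :=
          ((hf s h1).differentiable one_ne_zero).comp
            (differentiable_id.prodMk (differentiable_const _))
        exact hc'.add ((ih (s+1) (by omega)).comp hf')
      · have : V s = h := funext fun y => hVge s h1 y
        rw [this]; exact hh.differentiable one_ne_zero
  -- the gradient of the value function along the rollout is the costate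
  have hgradV : ∀ k s, T ≤ s + k → 1 ≤ s → s ≤ T →
      gradient (V s) (x u s) = lam u s := by
    intro k
    induction k with
    | zero =>
      intro s h1 h2 h3
      have hsT : s = T := by omega
      have : V s = h := funext fun y => hVge s (by omega) y
      rw [this, hsT, hlamT]
    | succ k ih =>
      intro s h1 h2 h3
      by_cases hs : s < T
      · have heq : V s = fun y => c s y (uN s) + V (s+1) (f s y (uN s)) :=
          funext fun y => hVlt s hs y
        have hc' : DifferentiableAt ℝ (fun y : EuclideanSpace ℝ (Fin n) => c s y (uN s)) (x u s) :=
          (((hc s hs).differentiable one_ne_zero).comp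
            (differentiable_id.prodMk (differentiable_const _))) (x u s)
        have hf' : DifferentiableAt ℝ (fun y : EuclideanSpace ℝ (Fin n) => f s y (uN s)) (x u s) :=
          (((hf s hs).differentiable one_ne_zero).comp
            (differentiable_id.prodMk (differentiable_const _))) (x u s)
        have hV' : DifferentiableAt ℝ (V (s+1)) (f s (x u s) (uN s)) :=
          (hVdiff (k+1) (s+1) (by omega)) _
        have hcomp : DifferentiableAt ℝ (fun y : EuclideanSpace ℝ (Fin n) => V (s+1) (f s y (uN s))) (x u s) :=
          DifferentiableAt.comp _ hV' hf'
        rw [heq, grad_add_aux hc' hcomp, grad_comp_aux hf' hV']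
        have hx1 : f s (x u s) (uN s) = x u (s+1) := by
          rw [huN s hs]
          exact (by simpa using hxrec u ⟨s, hs⟩ : x u (s+1) = f s (x u s) (u ⟨s, hs⟩)).symm
        rw [hx1, ih (s+1) (by omega) (by omega) hs]
        have hlam := hlamrec u ⟨s, hs⟩ (by simpa using h2)
        simp only [Fin.val_mk] at hlam
        rw [huN s hs]
        exact hlam.symm
      · have hsT : s = T := by omega
        have : V s = h := funext fun y => hVge s (by omega) y
        rw [this, hsT, hlamT]
  -- rollout agreement up to time t after updating the control at time t
  have hxsame : ∀ v : EuclideanSpace ℝ (Fin m), ∀ s, s ≤ (t : ℕ) → x (Function.update u t v) s = x u s := by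
    intro v s
    induction s with
    | zero => intro _; rw [hx0, hx0]
    | succ s ih =>
      intro hst
      have hsT : s < T := lt_of_lt_of_le (Nat.lt_of_succ_le hst) t.isLt.le
      have hne : (⟨s, hsT⟩ : Fin T) ≠ t := Fin.ne_of_val_ne (by simp; omega)
      have h1 : x (Function.update u t v) (s+1)
          = f s (x (Function.update u t v) s) (Function.update u t v ⟨s, hsT⟩) := by
        simpa using hxrec (Function.update u t v) ⟨s, hsT⟩
      have h2 : x u (s+1) = f s (x u s) (u ⟨s, hsT⟩) := by
        simpa using hxrec u ⟨s, hsT⟩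
      rw [h1, h2, Function.update_of_ne hne, ih (by omega)]
  -- the state one step after the update
  have hxt1 : ∀ v : EuclideanSpace ℝ (Fin m), x (Function.update u t v) ((t : ℕ) + 1) = f t (x u t) v := by
    intro v
    rw [hxrec (Function.update u t v) t, hxsame v t le_rfl, Function.update_self]
  -- tail sum identity
  have htail : ∀ v : EuclideanSpace ℝ (Fin m), ∀ k s, T ≤ s + k → (t : ℕ) < s → s ≤ T →
      (∑ r ∈ Finset.Ico s T, c r (x (Function.update u t v) r) (uN r))
          + h (x (Function.update u t v) T)
        = V s (x (Function.update u t v) s) := by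
    intro v k
    induction k with
    | zero =>
      intro s h1 h2 h3
      have hsT : s = T := by omega
      rw [hsT, Finset.Ico_self, Finset.sum_empty, zero_add, hVge T (lt_irrefl T)]
    | succ k ih =>
      intro s h1 h2 h3
      by_cases hs : s < T
      · rw [Finset.sum_eq_sum_Ico_succ_bot hs, add_assoc,
          ih (s+1) (by omega) (by omega) hs, hVlt s hs]
        have hupd : Function.update u t v ⟨s, hs⟩ = u ⟨s, hs⟩ :=
          Function.update_of_ne (Fin.ne_of_val_ne (by simp; omega)) _ _
        have hx1 : x (Function.update u t v) (s+1)
            = f s (x (Function.update u t v) s) (uN s) := by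
          rw [huN s hs, ← hupd]
          simpa using hxrec (Function.update u t v) ⟨s, hs⟩
        rw [hx1]
      · have hsT : s = T := by omega
        rw [hsT, Finset.Ico_self, Finset.sum_empty, zero_add, hVge T (lt_irrefl T)]
  -- decomposition of Φ along the update
  have hΦeq : (fun v : EuclideanSpace ℝ (Fin m) => Φ (Function.update u t v)) = fun v =>
      (∑ r ∈ Finset.Ico 0 (t : ℕ), c r (x u r) (uN r))
        + (c t (x u t) v + V ((t : ℕ) + 1) (f t (x u t) v)) := by
    funext v
    rw [hΦ (Function.update u t v)]
    set u' : Fin T → EuclideanSpace ℝ (Fin m) := Function.update u t v with hu'def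
    set G : ℕ → ℝ := fun r =>
      if hr : r < T then c r (x u' r) (u' ⟨r, hr⟩) else 0 with hGdef
    have hG : ∀ r : Fin T, c r (x u' r) (u' r) = G r := by
      intro r
      rw [hGdef]
      simp only [r.isLt, dif_pos, Fin.eta]
    have hsum1 : ∑ r : Fin T, c r (x u' r) (u' r) = ∑ r ∈ Finset.Ico 0 T, G r := by
      rw [← Finset.range_eq_Ico, ← Fin.sum_univ_eq_sum_range G T]
      exact Finset.sum_congr rfl fun r _ => hG r
    rw [hsum1, ← Finset.sum_Ico_consecutive G (Nat.zero_le ((t:ℕ)+1)) t.isLt,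
      Finset.sum_Ico_succ_top (Nat.zero_le (t : ℕ))]
    -- head sum: controls and states unchanged
    have hhead : ∑ r ∈ Finset.Ico 0 (t : ℕ), G r
        = ∑ r ∈ Finset.Ico 0 (t : ℕ), c r (x u r) (uN r) := by
      apply Finset.sum_congr rfl
      intro r hr
      have hrt : r < (t : ℕ) := (Finset.mem_Ico.mp hr).2
      have hrT : r < T := lt_trans hrt t.isLt
      rw [hGdef]
      simp only [dif_pos hrT]
      rw [hu'def, Function.update_of_ne (Fin.ne_of_val_ne (by simp; omega)),
        hxsame v r (by omega), huN r hrT]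
    -- the t-th term
    have hGt : G (t : ℕ) = c t (x u t) v := by
      rw [hGdef]
      simp only [dif_pos t.isLt, Fin.eta]
      rw [hu'def, Function.update_self, hxsame v t le_rfl]
    -- tail sum via the value function
    have htl : (∑ r ∈ Finset.Ico ((t:ℕ)+1) T, G r) + h (x u' T)
        = V ((t:ℕ)+1) (f t (x u t) v) := by
      have hGe : ∑ r ∈ Finset.Ico ((t:ℕ)+1) T, G r
          = ∑ r ∈ Finset.Ico ((t:ℕ)+1) T, c r (x u' r) (uN r) := by
        apply Finset.sum_congr rfl
        intro r hr
        have hr1 : (t:ℕ)+1 ≤ r := (Finset.mem_Ico.mp hr).1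
        have hrT : r < T := (Finset.mem_Ico.mp hr).2
        rw [hGdef]
        simp only [dif_pos hrT]
        rw [hu'def, Function.update_of_ne (Fin.ne_of_val_ne (by simp; omega)), huN r hrT]
      rw [hGe, hu'def, htail v T ((t:ℕ)+1) (by omega) (by omega) t.isLt, hxt1 v]
    calc (∑ r ∈ Finset.Ico 0 (t:ℕ), G r + G (t:ℕ))
          + ∑ r ∈ Finset.Ico ((t:ℕ)+1) T, G r + h (x u' T)
        = ∑ r ∈ Finset.Ico 0 (t:ℕ), G r + G (t:ℕ)
            + ((∑ r ∈ Finset.Ico ((t:ℕ)+1) T, G r) + h (x u' T)) := by ring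
      _ = (∑ r ∈ Finset.Ico 0 (t:ℕ), c r (x u r) (uN r))
            + (c t (x u t) v + V ((t:ℕ)+1) (f t (x u t) v)) := by
          rw [hhead, hGt, htl]; ring
  -- compute the block gradient
  rw [hΦeq]
  rw [grad_const_add_aux]
  have hc' : DifferentiableAt ℝ (fun v : EuclideanSpace ℝ (Fin m) => c t (x u t) v) (u t) :=
    (((hc t t.isLt).differentiable one_ne_zero).comp
      ((differentiable_const _).prodMk differentiable_id)) (u t)
  have hf' : DifferentiableAt ℝ (fun v : EuclideanSpace ℝ (Fin m) => f t (x u t) v) (u t) :=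
    (((hf t t.isLt).differentiable one_ne_zero).comp
      ((differentiable_const _).prodMk differentiable_id)) (u t)
  have hV' : DifferentiableAt ℝ (V ((t:ℕ)+1)) (f t (x u t) (u t)) :=
    (hVdiff T ((t:ℕ)+1) (by omega)) _
  have hcomp : DifferentiableAt ℝ (fun v : EuclideanSpace ℝ (Fin m) => V ((t:ℕ)+1) (f t (x u t) v)) (u t) :=
    DifferentiableAt.comp _ hV' hf'
  rw [grad_add_aux hc' hcomp, grad_comp_aux hf' hV']
  rw [show f t (x u t) (u t) = x u ((t:ℕ)+1) from (hxrec u t).symm]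
  rw [hgradV T ((t:ℕ)+1) (by omega) (by omega) t.isLt]
end

section
/- (Lemma 1, sufficiency.) In the dynamic game setup, let (ξ₁*,…,ξ_M*) be a profile of feasible trajectories, and suppose that for every robot i the reduced objective Φᵢ : (ℝ^{mᵢ})^T → ℝ, defined by mapping a control sequence uᵢ to Jᵢ(rollout of uᵢ, ξ*_{Nᵢ}) with the neighbors' trajectories held at their values in the profile, is a convex function. If for every robot i there exists a costate sequence λᵢ satisfying the PMP-G conditions (dynamics recursion, stationarity in uᵢ, costate recursion, and boundary condition λᵢ^T = ∇_{xᵢ} hᵢ) along ξᵢ*, then (ξ₁*,…,ξ_M*) is a Nash equilibrium. -/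
open Topology InnerProductSpace RealInnerProductSpace


/-!
STATEMENT 3 (Lemma 1, sufficiency): if for every robot the reduced objective Φᵢ
(against the neighbors' trajectories in the profile) is convex and there exists a
costate sequence satisfying the PMP-G conditions along ξᵢ*, then the profile of
feasible trajectories is a Nash equilibrium.
-/

/-- A trajectory `(x, u)` is feasible for initial state `x0` and dynamics `f`
over horizon `T`. -/
def GameFeasible {X U : Type*} (T : ℕ) (x0 : X) (f : ℕ → X → U → X)
    (x : ℕ → X) (u : ℕ → U) : Prop :=
  x 0 = x0 ∧ ∀ t < T, x (t + 1) = f t (x t) (u t)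

-- gradient pairing
lemma grad_pair {F : Type*} [NormedAddCommGroup F] [InnerProductSpace ℝ F] [CompleteSpace F]
    (f : F → ℝ) (x v : F) : ⟪gradient f x, v⟫_ℝ = fderiv ℝ f x v := by
  simp [gradient, InnerProductSpace.toDual_symm_apply]

-- convex with zero derivative at 0 implies min vs 1
lemma convex_deriv_zero_min (g : ℝ → ℝ) (hg : ConvexOn ℝ Set.univ g)
    (hd : HasDerivAt g 0 0) : g 0 ≤ g 1 := by
  have hslope : Filter.Tendsto (slope g 0) (𝓝[>] (0:ℝ)) (𝓝 0) :=
    ((hasDerivAt_iff_tendsto_slope.mp hd).mono_left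
      (nhdsWithin_mono _ (by intro s hs; exact ne_of_gt hs)))
  have hev : ∀ᶠ s in 𝓝[>] (0:ℝ), slope g 0 s ≤ g 1 - g 0 := by
    filter_upwards [Ioo_mem_nhdsGT_of_mem (by norm_num : (0:ℝ) ∈ Set.Ico 0 1)] with s hs
    have h0 : (0:ℝ) < s := hs.1
    have h1 : s < 1 := hs.2
    have := hg.2 (Set.mem_univ 0) (Set.mem_univ 1) (by linarith : (0:ℝ) ≤ 1 - s)
      (le_of_lt h0) (by ring)
    simp only [smul_eq_mul, mul_zero, mul_one, zero_add] at this
    rw [slope_def_field, sub_zero, div_le_iff₀ h0]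
    calc g s - g 0 ≤ ((1 - s) * g 0 + s * g 1) - g 0 := by linarith
      _ = (g 1 - g 0) * s := by ring
  have : (0:ℝ) ≤ g 1 - g 0 := le_of_tendsto hslope hev
  linarith

section partials
variable {X U Y : Type*} [NormedAddCommGroup X] [NormedSpace ℝ X]
  [NormedAddCommGroup U] [NormedSpace ℝ U] [NormedAddCommGroup Y] [NormedSpace ℝ Y]
  {F2 : X × U → Y} {D : X × U →L[ℝ] Y} {a : X} {b : U}

lemma partial_fst_hasFDerivAt (hD : HasFDerivAt F2 D (a, b)) :
    HasFDerivAt (fun x => F2 (x, b)) (D.comp ((ContinuousLinearMap.id ℝ X).prod 0)) a :=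
  hD.comp a (HasFDerivAt.prodMk (hasFDerivAt_id a) (hasFDerivAt_const b a))

lemma partial_snd_hasFDerivAt (hD : HasFDerivAt F2 D (a, b)) :
    HasFDerivAt (fun y => F2 (a, y)) (D.comp ((0 : U →L[ℝ] X).prod (ContinuousLinearMap.id ℝ U))) b :=
  hD.comp b (HasFDerivAt.prodMk (hasFDerivAt_const a b) (hasFDerivAt_id b))

lemma partial_fst_fderiv_apply (hD : HasFDerivAt F2 D (a, b)) (v : X) :
    fderiv ℝ (fun x => F2 (x, b)) a v = D (v, 0) := by
  rw [(partial_fst_hasFDerivAt hD).fderiv]; simp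

lemma partial_snd_fderiv_apply (hD : HasFDerivAt F2 D (a, b)) (w : U) :
    fderiv ℝ (fun y => F2 (a, y)) b w = D (0, w) := by
  rw [(partial_snd_hasFDerivAt hD).fderiv]; simp

lemma clm_prod_split (D : X × U →L[ℝ] Y) (v : X) (w : U) :
    D (v, w) = D (v, 0) + D (0, w) := by
  rw [← map_add]; simp
end partials
set_option maxHeartbeats 1000000 in
theorem PMPG_convex_sufficient_for_nash
    (M T : ℕ) (hM : 1 ≤ M) (hT : 1 ≤ T)
    (n mdim : Fin M → ℕ)
    (x0 : (i : Fin M) → EuclideanSpace ℝ (Fin (n i)))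
    (N : Fin M → Finset (Fin M))
    (f : (i : Fin M) → ℕ → EuclideanSpace ℝ (Fin (n i)) →
      EuclideanSpace ℝ (Fin (mdim i)) → EuclideanSpace ℝ (Fin (n i)))
    (c : (i : Fin M) → ℕ → EuclideanSpace ℝ (Fin (n i)) →
      EuclideanSpace ℝ (Fin (mdim i)) →
      ((j : N i) → EuclideanSpace ℝ (Fin (n j.1))) → ℝ)
    (h : (i : Fin M) → EuclideanSpace ℝ (Fin (n i)) →
      ((j : N i) → EuclideanSpace ℝ (Fin (n j.1))) → ℝ)
    -- continuous differentiability of the data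
    (hf : ∀ i, ∀ t < T, ContDiff ℝ 1
      (fun p : EuclideanSpace ℝ (Fin (n i)) × EuclideanSpace ℝ (Fin (mdim i)) =>
        f i t p.1 p.2))
    (hc : ∀ i, ∀ t < T, ContDiff ℝ 1
      (fun p : EuclideanSpace ℝ (Fin (n i)) × EuclideanSpace ℝ (Fin (mdim i)) ×
          ((j : N i) → EuclideanSpace ℝ (Fin (n j.1))) =>
        c i t p.1 p.2.1 p.2.2))
    (hh : ∀ i, ContDiff ℝ 1
      (fun p : EuclideanSpace ℝ (Fin (n i)) ×
          ((j : N i) → EuclideanSpace ℝ (Fin (n j.1))) =>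
        h i p.1 p.2))
    -- the candidate profile (ξ₁*, …, ξ_M*), assumed feasible
    (xs : (i : Fin M) → ℕ → EuclideanSpace ℝ (Fin (n i)))
    (us : (i : Fin M) → ℕ → EuclideanSpace ℝ (Fin (mdim i)))
    (hfeas : ∀ i, GameFeasible T (x0 i) (f i) (xs i) (us i))
    -- the rollout map: control sequence ↦ state trajectory from x0 i
    (roll : (i : Fin M) → (ℕ → EuclideanSpace ℝ (Fin (mdim i))) → ℕ →
      EuclideanSpace ℝ (Fin (n i)))
    (hroll0 : ∀ i u, roll i u 0 = x0 i)
    (hrollrec : ∀ i u, ∀ t < T, roll i u (t + 1) = f i t (roll i u t) (u t))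
    -- the reduced objective Φᵢ of robot i against the neighbors' profile trajectories
    (Φ : (i : Fin M) → (ℕ → EuclideanSpace ℝ (Fin (mdim i))) → ℝ)
    (hΦ : ∀ i u, Φ i u =
      (∑ t ∈ Finset.range T, c i t (roll i u t) (u t) (fun j => xs j.1 t))
        + h i (roll i u T) (fun j => xs j.1 T))
    -- convexity of each reduced objective
    (hconv : ∀ i, ConvexOn ℝ Set.univ (Φ i))
    -- PMP-G conditions hold for each robot along ξᵢ* with some costate sequence
    (hPMPG : ∀ i, ∃ lam : ℕ → EuclideanSpace ℝ (Fin (n i)),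
      (∀ t < T,
        gradient (fun v => c i t (xs i t) v (fun j => xs j.1 t)) (us i t)
          + (ContinuousLinearMap.adjoint
              (fderiv ℝ (fun v => f i t (xs i t) v) (us i t))) (lam (t + 1)) = 0) ∧
      (∀ t, 1 ≤ t → t < T →
        lam t = gradient (fun y => c i t y (us i t) (fun j => xs j.1 t)) (xs i t)
          + (ContinuousLinearMap.adjoint
              (fderiv ℝ (fun y => f i t y (us i t)) (xs i t))) (lam (t + 1))) ∧
      lam T = gradient (fun y => h i y (fun j => xs j.1 T)) (xs i T)) :
    -- conclusion: the profile is a Nash equilibrium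
    ∀ i, ∀ (x : ℕ → EuclideanSpace ℝ (Fin (n i)))
        (u : ℕ → EuclideanSpace ℝ (Fin (mdim i))),
      GameFeasible T (x0 i) (f i) x u →
        (∑ t ∈ Finset.range T, c i t (xs i t) (us i t) (fun j => xs j.1 t))
            + h i (xs i T) (fun j => xs j.1 T)
          ≤ (∑ t ∈ Finset.range T, c i t (x t) (u t) (fun j => xs j.1 t))
            + h i (x T) (fun j => xs j.1 T) := by
  intro i x u hxu
  classical
  obtain ⟨lam, hstat, hcost, hbound⟩ := hPMPG i
  -- rollouts agree with the given trajectories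
  have hrollx : ∀ t, t ≤ T → roll i u t = x t := by
    intro t
    induction t with
    | zero => intro _; rw [hroll0, hxu.1]
    | succ t ih =>
      intro ht
      have ht' : t < T := ht
      rw [hrollrec i u t ht', ih ht'.le, hxu.2 t ht']
  have hrollxs : ∀ t, t ≤ T → roll i (us i) t = xs i t := by
    intro t
    induction t with
    | zero => intro _; rw [hroll0, (hfeas i).1]
    | succ t ih =>
      intro ht
      have ht' : t < T := ht
      rw [hrollrec i (us i) t ht', ih ht'.le, (hfeas i).2 t ht']
  -- direction and path of controls
  set d : ℕ → EuclideanSpace ℝ (Fin (mdim i)) := fun t => u t - us i t with hd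
  set w : ℝ → (ℕ → EuclideanSpace ℝ (Fin (mdim i))) :=
    fun s => fun t => us i t + s • d t with hwdef
  have hw0 : w 0 = us i := by funext t; simp [hwdef]
  have hw1 : w 1 = u := by funext t; simp [hwdef, hd]
  -- the scalar function along the segment
  set g : ℝ → ℝ := fun s => Φ i (w s) with hgdef
  have hgconv : ConvexOn ℝ Set.univ g := by
    refine ⟨convex_univ, ?_⟩
    intro s _ r _ a b ha hb hab
    have hw' : w (a • s + b • r) = a • w s + b • w r := by
      funext t
      show us i t + (a • s + b • r) • d t
        = a • (us i t + s • d t) + b • (us i t + r • d t)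
      rw [smul_eq_mul, smul_eq_mul, smul_add, smul_add, smul_smul, smul_smul,
        add_add_add_comm, ← add_smul, ← add_smul, hab, one_smul]
    simp only [hgdef, hw']
    exact (hconv i).2 (Set.mem_univ _) (Set.mem_univ _) ha hb hab
  -- derivative data
  have hwt : ∀ t, HasDerivAt (fun s => w s t) (d t) 0 := by
    intro t
    have h1 : HasDerivAt (fun s : ℝ => s • d t) ((1:ℝ) • d t) 0 :=
      (hasDerivAt_id 0).smul_const (d t)
    simpa [hwdef] using h1.const_add (us i t)
  set A : ℕ → (EuclideanSpace ℝ (Fin (n i)) →L[ℝ] EuclideanSpace ℝ (Fin (n i))) :=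
    fun t => fderiv ℝ (fun y => f i t y (us i t)) (xs i t) with hAdef
  set B : ℕ → (EuclideanSpace ℝ (Fin (mdim i)) →L[ℝ] EuclideanSpace ℝ (Fin (n i))) :=
    fun t => fderiv ℝ (fun v => f i t (xs i t) v) (us i t) with hBdef
  set δ : ℕ → EuclideanSpace ℝ (Fin (n i)) :=
    fun t => Nat.rec 0 (fun t δt => A t δt + B t (d t)) t with hδdef
  have hδ0 : δ 0 = 0 := rfl
  have hδsucc : ∀ t, δ (t + 1) = A t (δ t) + B t (d t) := fun t => rfl
  set Df : ℕ → (EuclideanSpace ℝ (Fin (n i)) × EuclideanSpace ℝ (Fin (mdim i)) →L[ℝ]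
      EuclideanSpace ℝ (Fin (n i))) :=
    fun t => fderiv ℝ (fun p : EuclideanSpace ℝ (Fin (n i)) ×
      EuclideanSpace ℝ (Fin (mdim i)) => f i t p.1 p.2) (xs i t, us i t) with hDfdef
  have hfd : ∀ t < T, HasFDerivAt (fun p : EuclideanSpace ℝ (Fin (n i)) ×
      EuclideanSpace ℝ (Fin (mdim i)) => f i t p.1 p.2) (Df t) (xs i t, us i t) :=
    fun t ht => ((hf i t ht).differentiable one_ne_zero (xs i t, us i t)).hasFDerivAt
  -- derivative of the rollout along the segment
  have hroll_deriv : ∀ t, t ≤ T → HasDerivAt (fun s => roll i (w s) t) (δ t) 0 := by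
    intro t
    induction t with
    | zero =>
      intro _
      have he : (fun s => roll i (w s) 0) = fun _ => x0 i := funext fun s => hroll0 i (w s)
      rw [he, hδ0]
      exact hasDerivAt_const 0 (x0 i)
    | succ t ih =>
      intro ht
      have ht' : t < T := ht
      have heq : (fun s => roll i (w s) (t + 1))
          = fun s => f i t (roll i (w s) t) (w s t) :=
        funext fun s => hrollrec i (w s) t ht'
      rw [heq, hδsucc]
      have hpt : HasDerivAt (fun s => (roll i (w s) t, w s t)) (δ t, d t) 0 :=
        (ih ht'.le).prodMk (hwt t)
      have hpoint : (fun s => (roll i (w s) t, w s t)) 0 = (xs i t, us i t) := by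
        have h1 : roll i (w 0) t = xs i t := by rw [hw0]; exact hrollxs t ht'.le
        have h2 : w 0 t = us i t := by rw [hw0]
        simp [h1, h2]
      have hD : HasFDerivAt (fun p : EuclideanSpace ℝ (Fin (n i)) ×
          EuclideanSpace ℝ (Fin (mdim i)) => f i t p.1 p.2) (Df t)
          ((fun s => (roll i (w s) t, w s t)) 0) := by
        rw [hpoint]; exact hfd t ht'
      have hder : Df t (δ t, d t) = A t (δ t) + B t (d t) := by
        rw [clm_prod_split]
        congr 1
        · exact (partial_fst_fderiv_apply (hfd t ht') (δ t)).symm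
        · exact (partial_snd_fderiv_apply (hfd t ht') (d t)).symm
      have hcomp := hD.comp_hasDerivAt 0 hpt
      exact hder ▸ hcomp
  -- derivatives of the running and terminal costs
  set Dc : ℕ → (EuclideanSpace ℝ (Fin (n i)) × EuclideanSpace ℝ (Fin (mdim i)) ×
      ((j : N i) → EuclideanSpace ℝ (Fin (n j.1))) →L[ℝ] ℝ) :=
    fun t => fderiv ℝ (fun p : EuclideanSpace ℝ (Fin (n i)) ×
        EuclideanSpace ℝ (Fin (mdim i)) ×
        ((j : N i) → EuclideanSpace ℝ (Fin (n j.1))) => c i t p.1 p.2.1 p.2.2)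
      (xs i t, us i t, fun j : N i => xs j.1 t) with hDcdef
  have hcd : ∀ t < T, HasFDerivAt (fun p : EuclideanSpace ℝ (Fin (n i)) ×
      EuclideanSpace ℝ (Fin (mdim i)) ×
      ((j : N i) → EuclideanSpace ℝ (Fin (n j.1))) => c i t p.1 p.2.1 p.2.2)
      (Dc t) (xs i t, us i t, fun j : N i => xs j.1 t) :=
    fun t ht => ((hc i t ht).differentiable one_ne_zero _).hasFDerivAt
  set Dh : (EuclideanSpace ℝ (Fin (n i)) ×
      ((j : N i) → EuclideanSpace ℝ (Fin (n j.1))) →L[ℝ] ℝ) :=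
    fderiv ℝ (fun p : EuclideanSpace ℝ (Fin (n i)) ×
        ((j : N i) → EuclideanSpace ℝ (Fin (n j.1))) => h i p.1 p.2)
      (xs i T, fun j : N i => xs j.1 T) with hDhdef
  have hhd : HasFDerivAt (fun p : EuclideanSpace ℝ (Fin (n i)) ×
      ((j : N i) → EuclideanSpace ℝ (Fin (n j.1))) => h i p.1 p.2) Dh
      (xs i T, fun j : N i => xs j.1 T) :=
    ((hh i).differentiable one_ne_zero _).hasFDerivAt
  -- derivative of g at 0
  have hgderiv : HasDerivAt g
      ((∑ t ∈ Finset.range T, Dc t (δ t, d t, 0)) + Dh (δ T, 0)) 0 := by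
    have hge : g = fun s =>
        (∑ t ∈ Finset.range T, c i t (roll i (w s) t) (w s t) fun j : N i => xs j.1 t)
          + h i (roll i (w s) T) fun j : N i => xs j.1 T := funext fun s => hΦ i (w s)
    rw [hge]
    refine HasDerivAt.add ?_ ?_
    · refine HasDerivAt.fun_sum ?_
      intro t ht
      have ht' : t < T := Finset.mem_range.mp ht
      have hpt : HasDerivAt
          (fun s => (roll i (w s) t, w s t, (fun j : N i => xs j.1 t))) (δ t, d t, 0) 0 :=
        (hroll_deriv t ht'.le).prodMk ((hwt t).prodMk (hasDerivAt_const 0 _))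
      have hpoint : (fun s => (roll i (w s) t, w s t, (fun j : N i => xs j.1 t))) 0 = (xs i t, us i t, fun j : N i => xs j.1 t) := by
        have h1 : roll i (w 0) t = xs i t := by rw [hw0]; exact hrollxs t ht'.le
        have h2 : w 0 t = us i t := by rw [hw0]
        simp [h1, h2]
      have hD : HasFDerivAt (fun p : EuclideanSpace ℝ (Fin (n i)) ×
          EuclideanSpace ℝ (Fin (mdim i)) ×
          ((j : N i) → EuclideanSpace ℝ (Fin (n j.1))) => c i t p.1 p.2.1 p.2.2)
          (Dc t) ((fun s => (roll i (w s) t, w s t, (fun j : N i => xs j.1 t))) 0) := by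
        rw [hpoint]; exact hcd t ht'
      exact hD.comp_hasDerivAt 0 hpt
    · have hpt : HasDerivAt
          (fun s => (roll i (w s) T, (fun j : N i => xs j.1 T))) (δ T, 0) 0 :=
        (hroll_deriv T le_rfl).prodMk (hasDerivAt_const 0 _)
      have hpoint : (fun s => (roll i (w s) T, (fun j : N i => xs j.1 T))) 0 = (xs i T, fun j : N i => xs j.1 T) := by
        have h1 : roll i (w 0) T = xs i T := by rw [hw0]; exact hrollxs T le_rfl
        simp [h1]
      have hD : HasFDerivAt (fun p : EuclideanSpace ℝ (Fin (n i)) ×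
          ((j : N i) → EuclideanSpace ℝ (Fin (n j.1))) => h i p.1 p.2) Dh
          ((fun s => (roll i (w s) T, (fun j : N i => xs j.1 T))) 0) := by
        rw [hpoint]; exact hhd
      exact hD.comp_hasDerivAt 0 hpt
  -- per-step telescoping identity
  have hstep : ∀ t < T, Dc t (δ t, d t, 0)
      = ⟪lam t, δ t⟫_ℝ - ⟪lam (t + 1), δ (t + 1)⟫_ℝ := by
    intro t ht
    have hsplit : Dc t (δ t, d t, 0) = Dc t (δ t, 0) + Dc t (0, d t, 0) :=
      clm_prod_split (Dc t) (δ t) (d t, 0)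
    have e1 : ⟪gradient (fun y => c i t y (us i t) fun j : N i => xs j.1 t)
        (xs i t), δ t⟫_ℝ = Dc t (δ t, 0) := by
      rw [grad_pair]
      exact partial_fst_fderiv_apply (hcd t ht) (δ t)
    have e2 : ⟪gradient (fun v => c i t (xs i t) v fun j : N i => xs j.1 t)
        (us i t), d t⟫_ℝ = Dc t (0, d t, 0) := by
      rw [grad_pair]
      have h2 := partial_fst_fderiv_apply (partial_snd_hasFDerivAt (hcd t ht)) (d t)
      exact h2.trans (by simp)
    have hstat' : gradient (fun v => c i t (xs i t) v fun j : N i => xs j.1 t) (us i t)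
        = -(ContinuousLinearMap.adjoint (B t)) (lam (t + 1)) := by
      simp only [hBdef]
      exact eq_neg_of_add_eq_zero_left (hstat t ht)
    have e2' : Dc t (0, d t, 0) = -⟪lam (t + 1), B t (d t)⟫_ℝ := by
      rw [← e2, hstat', inner_neg_left]
      congr 1
      exact ContinuousLinearMap.adjoint_inner_left (B t) (d t) (lam (t + 1))
    have hδrec : ⟪lam (t + 1), δ (t + 1)⟫_ℝ
        = ⟪(ContinuousLinearMap.adjoint (A t)) (lam (t + 1)), δ t⟫_ℝ
          + ⟪lam (t + 1), B t (d t)⟫_ℝ := by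
      rw [hδsucc, inner_add_right]
      congr 1
      exact (ContinuousLinearMap.adjoint_inner_left (A t) (δ t) (lam (t + 1))).symm
    rcases Nat.eq_zero_or_pos t with h0 | h1
    · subst h0
      rw [hsplit, e2', hδrec, hδ0]
      simp
      exact map_zero (Dc 0)
    · have hA' : (ContinuousLinearMap.adjoint (A t)) (lam (t + 1))
          = lam t - gradient (fun y => c i t y (us i t) fun j : N i => xs j.1 t)
            (xs i t) := by
        simp only [hAdef]
        rw [hcost t h1 ht]
        abel
      rw [hsplit, e2', hδrec, hA', inner_sub_left, ← e1]
      ring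
  have hsum : ∑ t ∈ Finset.range T, Dc t (δ t, d t, 0)
      = ⟪lam 0, δ 0⟫_ℝ - ⟪lam T, δ T⟫_ℝ := by
    rw [Finset.sum_congr rfl fun t ht => hstep t (Finset.mem_range.mp ht)]
    exact Finset.sum_range_sub' (fun t => ⟪lam t, δ t⟫_ℝ) T
  have hghT : ⟪lam T, δ T⟫_ℝ = Dh (δ T, 0) := by
    rw [hbound, grad_pair]
    exact partial_fst_fderiv_apply hhd (δ T)
  have hG0 : (∑ t ∈ Finset.range T, Dc t (δ t, d t, 0)) + Dh (δ T, 0) = 0 := by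
    rw [hsum, ← hghT, hδ0, inner_zero_right]
    ring
  have hmin : g 0 ≤ g 1 := convex_deriv_zero_min g hgconv (hG0 ▸ hgderiv)
  have e0 : g 0 = (∑ t ∈ Finset.range T, c i t (xs i t) (us i t) fun j => xs j.1 t)
      + h i (xs i T) fun j => xs j.1 T := by
    show Φ i (w 0) = _
    rw [hw0, hΦ i (us i), hrollxs T le_rfl]
    congr 1
    exact Finset.sum_congr rfl fun t ht => by
      rw [hrollxs t (Finset.mem_range.mp ht).le]
  have e1' : g 1 = (∑ t ∈ Finset.range T, c i t (x t) (u t) fun j => xs j.1 t)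
      + h i (x T) fun j => xs j.1 T := by
    show Φ i (w 1) = _
    rw [hw1, hΦ i u, hrollx T le_rfl]
    congr 1
    exact Finset.sum_congr rfl fun t ht => by
      rw [hrollx t (Finset.mem_range.mp ht).le]
  rw [← e0, ← e1']
  exact hmin
end

section
/- (Correctness of the fixed points of the distributed shooting algorithm.) In the dynamic game setup, fix a step size γ > 0. For a profile of control sequences (u₁,…,u_M), let xᵢ be the rollout of uᵢ, let λᵢ be robot i's backward costate sequence computed along the profile, and let Δuᵢᵗ = ∇_u cᵢ,t(xᵢᵗ, uᵢᵗ, x_{Nᵢ}ᵗ) + (D_u fᵢ,t(xᵢᵗ, uᵢᵗ))ᵀ λᵢ^{t+1}. Then the profile is a fixed point of the update uᵢ ← uᵢ − γ Δuᵢ for all i if and only if Δuᵢᵗ = 0 for all i and all t, i.e., the PMP-G stationarity condition holds for every robot; consequently, if moreover each robot's reduced objective Φᵢ (control sequence ↦ total cost against the neighbors' trajectories in the profile) is convex, then every such fixed point yields a Nash equilibrium of the game. -/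
open Filter Set in
lemma convex_line_min {g : ℝ → ℝ} (hg : ConvexOn ℝ Set.univ g)
    (hd : HasDerivAt g 0 0) : g 0 ≤ g 1 := by
  have key : Tendsto (slope g 0) (nhdsWithin 0 (Set.Ioi 0)) (nhds 0) :=
    (hasDerivAt_iff_tendsto_slope.mp hd).mono_left
      (nhdsWithin_mono 0 (fun s hs => ne_of_gt hs))
  have hb : ∀ᶠ s in nhdsWithin (0:ℝ) (Set.Ioi 0), slope g 0 s ≤ g 1 - g 0 := by
    filter_upwards [Ioo_mem_nhdsGT_of_mem (by norm_num : (0:ℝ) ∈ Set.Ico 0 1)] with s hs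
    obtain ⟨hs0, hs1⟩ := hs
    have hcomb := hg.2 (Set.mem_univ (0:ℝ)) (Set.mem_univ (1:ℝ))
      (by linarith : (0:ℝ) ≤ 1 - s) (le_of_lt hs0) (by ring)
    simp only [smul_eq_mul, mul_zero, mul_one, zero_add] at hcomb
    rw [slope_def_field]
    rw [div_le_iff₀ (by linarith : (0:ℝ) < s - 0)]
    nlinarith [hcomb]
  have := le_of_tendsto key hb
  linarith

private lemma real_inner_gradient_eq {E : Type*} [NormedAddCommGroup E] [InnerProductSpace ℝ E]
    [CompleteSpace E] {g : E → ℝ} {L : E →L[ℝ] ℝ} {a : E} (hg : HasFDerivAt g L a) (v : E) :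
    (inner ℝ (gradient g a) v : ℝ) = L v := by
  have h1 : HasFDerivAt g ((InnerProductSpace.toDual ℝ E) (gradient g a)) a :=
    hg.differentiableAt.hasGradientAt.hasFDerivAt
  rw [← InnerProductSpace.toDual_apply_apply, h1.unique hg]

private lemma hasFDerivAt_fst_partial {E F G : Type*} [NormedAddCommGroup E] [NormedSpace ℝ E]
    [NormedAddCommGroup F] [NormedSpace ℝ F] [NormedAddCommGroup G] [NormedSpace ℝ G]
    {k : E × F → G} {L : E × F →L[ℝ] G} {a : E} {b : F}
    (hk : HasFDerivAt k L (a, b)) :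
    HasFDerivAt (fun y => k (y, b)) (L.comp ((ContinuousLinearMap.id ℝ E).prod 0)) a :=
  hk.comp a (HasFDerivAt.prodMk (hasFDerivAt_id a) (hasFDerivAt_const b a))

private lemma hasFDerivAt_snd_partial {E F G : Type*} [NormedAddCommGroup E] [NormedSpace ℝ E]
    [NormedAddCommGroup F] [NormedSpace ℝ F] [NormedAddCommGroup G] [NormedSpace ℝ G]
    {k : E × F → G} {L : E × F →L[ℝ] G} {a : E} {b : F}
    (hk : HasFDerivAt k L (a, b)) :
    HasFDerivAt (fun v => k (a, v)) (L.comp ((0 : F →L[ℝ] E).prod (ContinuousLinearMap.id ℝ F))) b :=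
  hk.comp b (HasFDerivAt.prodMk (hasFDerivAt_const a b) (hasFDerivAt_id b))

private lemma clm_prod_split_s4 {E F G : Type*} [NormedAddCommGroup E] [NormedSpace ℝ E]
    [NormedAddCommGroup F] [NormedSpace ℝ F] [NormedAddCommGroup G] [NormedSpace ℝ G]
    (L : E × F →L[ℝ] G) (a : E) (b : F) : L (a, b) = L (a, 0) + L (0, b) := by
  rw [← map_add]; simp

open Finset RealInnerProductSpace in
lemma shooting_stationary_min
    {E F : Type*} [NormedAddCommGroup E] [InnerProductSpace ℝ E] [CompleteSpace E]
    [NormedAddCommGroup F] [InnerProductSpace ℝ F] [CompleteSpace F]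
    (T : ℕ) (hT : 1 ≤ T)
    (f : ℕ → E → F → E) (c : ℕ → E → F → ℝ) (h : E → ℝ)
    (hf : ∀ t < T, ContDiff ℝ 1 (fun p : E × F => f t p.1 p.2))
    (hc : ∀ t < T, ContDiff ℝ 1 (fun p : E × F => c t p.1 p.2))
    (hh : ContDiff ℝ 1 h)
    (x0 : E) (us : ℕ → F) (xs : ℕ → E)
    (hxs0 : xs 0 = x0) (hxsrec : ∀ t < T, xs (t + 1) = f t (xs t) (us t))
    (lam : ℕ → E)
    (hlamT : lam T = gradient h (xs T))
    (hlamrec : ∀ t, 1 ≤ t → t < T → lam t = gradient (fun y => c t y (us t)) (xs t)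
      + (ContinuousLinearMap.adjoint (fderiv ℝ (fun y => f t y (us t)) (xs t))) (lam (t + 1)))
    (hstat : ∀ t < T, gradient (fun v => c t (xs t) v) (us t)
      + (ContinuousLinearMap.adjoint (fderiv ℝ (fun v => f t (xs t) v) (us t))) (lam (t + 1)) = 0)
    (roll : (ℕ → F) → ℕ → E)
    (hroll0 : ∀ u, roll u 0 = x0)
    (hrollrec : ∀ u, ∀ t < T, roll u (t + 1) = f t (roll u t) (u t))
    (Φ : (ℕ → F) → ℝ)
    (hΦ : ∀ u, Φ u = (∑ t ∈ Finset.range T, c t (roll u t) (u t)) + h (roll u T))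
    (hconv : ConvexOn ℝ Set.univ Φ)
    (u : ℕ → F) : Φ us ≤ Φ u := by
  classical
  set d : ℕ → F := fun t => u t - us t with hd
  set w : ℝ → ℕ → F := fun s t => us t + s • d t with hw
  set X : ℕ → ℝ → E := fun t s => roll (w s) t with hX
  set Df : ℕ → (E × F) →L[ℝ] E :=
    fun t => fderiv ℝ (fun p : E × F => f t p.1 p.2) (xs t, us t) with hDf
  set Dc : ℕ → (E × F) →L[ℝ] ℝ :=
    fun t => fderiv ℝ (fun p : E × F => c t p.1 p.2) (xs t, us t) with hDc
  set Dh : E →L[ℝ] ℝ := fderiv ℝ h (xs T) with hDh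
  set δ : ℕ → E := fun t => Nat.rec (motive := fun _ => E) 0 (fun t ih => Df t (ih, d t)) t with hδ
  have hδ0 : δ 0 = 0 := rfl
  have hδsucc : ∀ t, δ (t + 1) = Df t (δ t, d t) := fun t => rfl
  have hf' : ∀ t < T, HasFDerivAt (fun p : E × F => f t p.1 p.2) (Df t) (xs t, us t) :=
    fun t ht => (((hf t ht).differentiable one_ne_zero) _).hasFDerivAt
  have hc' : ∀ t < T, HasFDerivAt (fun p : E × F => c t p.1 p.2) (Dc t) (xs t, us t) :=
    fun t ht => (((hc t ht).differentiable one_ne_zero) _).hasFDerivAt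
  have hh' : HasFDerivAt h Dh (xs T) := ((hh.differentiable one_ne_zero) _).hasFDerivAt
  have hline : ∀ t, HasDerivAt (fun s : ℝ => us t + s • d t) (d t) 0 := by
    intro t
    simpa using ((hasDerivAt_id (0:ℝ)).smul_const (d t)).const_add (us t)
  -- the rollout along the line is differentiable in s with derivative δ t
  have key : ∀ t, t ≤ T → X t 0 = xs t ∧ HasDerivAt (fun s => X t s) (δ t) 0 := by
    intro t
    induction t with
    | zero =>
      intro _
      constructor
      · simp only [hX, hroll0, hxs0]
      · have hXe : (fun s => X 0 s) = fun _ => x0 := funext fun s => hroll0 (w s)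
        rw [hXe, hδ0]
        exact hasDerivAt_const 0 x0
    | succ t ih =>
      intro ht1
      have ht : t < T := ht1
      obtain ⟨hX0, hXd⟩ := ih (le_of_lt ht)
      have hF : HasFDerivAt (fun p : E × F => f t p.1 p.2) (Df t)
          (X t 0, us t + (0:ℝ) • d t) := by
        rw [hX0]; simpa using hf' t ht
      have hcurve : HasDerivAt (fun s : ℝ => (X t s, us t + s • d t)) (δ t, d t) 0 :=
        HasDerivAt.prodMk hXd (hline t)
      have hcomp := hF.comp_hasDerivAt 0 hcurve
      have hXeq : (fun s => X (t+1) s) = fun s => f t (X t s) (us t + s • d t) :=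
        funext fun s => by
          show roll (w s) (t+1) = _
          rw [hrollrec (w s) t ht]
      constructor
      · show X (t+1) 0 = xs (t+1)
        have := congrFun hXeq 0
        rw [this, hX0]
        simp [hxsrec t ht]
      · rw [hXeq, hδsucc]
        exact hcomp
  -- the objective along the line
  set g : ℝ → ℝ := fun s => Φ (w s) with hg
  have hgeq : g = fun s => (∑ t ∈ Finset.range T, c t (X t s) (us t + s • d t)) + h (X T s) := by
    funext s
    show Φ (w s) = _
    rw [hΦ (w s)]
  set D : ℝ := (∑ t ∈ Finset.range T, Dc t (δ t, d t)) + Dh (δ T) with hDdef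
  have hgderiv : HasDerivAt g D 0 := by
    rw [hgeq, hDdef]
    apply HasDerivAt.add
    · apply HasDerivAt.fun_sum
      intro t ht
      have htT : t < T := Finset.mem_range.mp ht
      have hC : HasFDerivAt (fun p : E × F => c t p.1 p.2) (Dc t)
          (X t 0, us t + (0:ℝ) • d t) := by
        rw [(key t htT.le).1]; simpa using hc' t htT
      have := hC.comp_hasDerivAt 0 (HasDerivAt.prodMk (key t htT.le).2 (hline t))
      exact this
    · have hH : HasFDerivAt h Dh (X T 0) := by rw [(key T le_rfl).1]; exact hh'
      have := hH.comp_hasDerivAt 0 (key T le_rfl).2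
      exact this
  -- pairing identities
  have hgradx : ∀ t, t < T → ∀ v : E,
      ⟪gradient (fun y => c t y (us t)) (xs t), v⟫ = Dc t (v, 0) := by
    intro t ht v
    have := real_inner_gradient_eq (hasFDerivAt_fst_partial (hc' t ht)) v
    simpa using this
  have hgradu : ∀ t, t < T → ∀ v : F,
      ⟪gradient (fun v' => c t (xs t) v') (us t), v⟫ = Dc t (0, v) := by
    intro t ht v
    have := real_inner_gradient_eq (hasFDerivAt_snd_partial (hc' t ht)) v
    simpa using this
  have hgradh : ∀ v : E, ⟪gradient h (xs T), v⟫ = Dh v := fun v =>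
    real_inner_gradient_eq hh' v
  have hA : ∀ t, t < T → ∀ v : E, fderiv ℝ (fun y => f t y (us t)) (xs t) v = Df t (v, 0) := by
    intro t ht v
    rw [(hasFDerivAt_fst_partial (hf' t ht)).fderiv]
    simp
  have hB : ∀ t, t < T → ∀ v : F, fderiv ℝ (fun v' => f t (xs t) v') (us t) v = Df t (0, v) := by
    intro t ht v
    rw [(hasFDerivAt_snd_partial (hf' t ht)).fderiv]
    simp
  -- telescoping
  have tele : ∀ j, j + 1 ≤ T →
      (∑ t ∈ Finset.Ico (T - j) T, ⟪gradient (fun y => c t y (us t)) (xs t), δ t⟫)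
        + ⟪lam T, δ T⟫
      = ⟪lam (T - j), δ (T - j)⟫
        + ∑ t ∈ Finset.Ico (T - j) T, ⟪lam (t + 1), Df t (0, d t)⟫ := by
    intro j
    induction j with
    | zero => intro _; simp
    | succ j ih =>
      intro hj
      have hk1 : 1 ≤ T - (j + 1) := by omega
      have hkT : T - (j + 1) < T := by omega
      have hsucc : T - (j + 1) + 1 = T - j := by omega
      have ih' := ih (by omega)
      rw [← hsucc] at ih'
      rw [Finset.sum_eq_sum_Ico_succ_bot hkT, Finset.sum_eq_sum_Ico_succ_bot hkT
        (f := fun t => ⟪lam (t + 1), Df t (0, d t)⟫)]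
      set k := T - (j + 1) with hk
      have hpoint : ⟪gradient (fun y => c k y (us k)) (xs k), δ k⟫
          + ⟪lam (k + 1), δ (k + 1)⟫
          = ⟪lam k, δ k⟫ + ⟪lam (k + 1), Df k (0, d k)⟫ := by
        rw [hδsucc k, clm_prod_split_s4 (Df k) (δ k) (d k), inner_add_right]
        rw [← hA k hkT (δ k)]
        rw [← ContinuousLinearMap.adjoint_inner_left]
        rw [← add_assoc, ← inner_add_left]
        rw [← hlamrec k hk1 hkT]
      rw [add_assoc, ih']
      linarith [hpoint]
  -- D = 0
  have hD0 : D = 0 := by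
    have hsplit : ∀ t ∈ Finset.range T, Dc t (δ t, d t)
        = ⟪gradient (fun y => c t y (us t)) (xs t), δ t⟫
          + ⟪gradient (fun v' => c t (xs t) v') (us t), d t⟫ := by
      intro t ht
      have htT := Finset.mem_range.mp ht
      rw [clm_prod_split_s4 (Dc t) (δ t) (d t), hgradx t htT, hgradu t htT]
    have hstep1 : D = (∑ t ∈ Finset.range T, ⟪gradient (fun y => c t y (us t)) (xs t), δ t⟫)
        + (∑ t ∈ Finset.range T, ⟪gradient (fun v' => c t (xs t) v') (us t), d t⟫)
        + ⟪lam T, δ T⟫ := by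
      rw [hDdef, Finset.sum_congr rfl hsplit, Finset.sum_add_distrib, ← hgradh, ← hlamT]
    have h0T : 0 < T := hT
    have hbot : (∑ t ∈ Finset.range T, ⟪gradient (fun y => c t y (us t)) (xs t), δ t⟫)
        = ⟪gradient (fun y => c 0 y (us 0)) (xs 0), δ 0⟫
          + ∑ t ∈ Finset.Ico 1 T, ⟪gradient (fun y => c t y (us t)) (xs t), δ t⟫ := by
      rw [Finset.range_eq_Ico, Finset.sum_eq_sum_Ico_succ_bot h0T]
    have htele := tele (T - 1) (by omega)
    have hT1 : T - (T - 1) = 1 := by omega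
    rw [hT1] at htele
    have hδ1 : δ 1 = Df 0 (0, d 0) := by
      have h1 := hδsucc 0
      rw [hδ0] at h1
      exact h1
    have hIco : (∑ t ∈ Finset.range T, ⟪lam (t + 1), Df t (0, d t)⟫)
        = ⟪lam 1, Df 0 (0, d 0)⟫ + ∑ t ∈ Finset.Ico 1 T, ⟪lam (t + 1), Df t (0, d t)⟫ := by
      rw [Finset.range_eq_Ico, Finset.sum_eq_sum_Ico_succ_bot h0T]
    have hzero0 : ⟪gradient (fun y => c 0 y (us 0)) (xs 0), δ 0⟫ = 0 := by
      rw [hδ0, inner_zero_right]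
    have hxpart : (∑ t ∈ Finset.range T, ⟪gradient (fun y => c t y (us t)) (xs t), δ t⟫)
        + ⟪lam T, δ T⟫ = ∑ t ∈ Finset.range T, ⟪lam (t + 1), Df t (0, d t)⟫ := by
      rw [hbot, hzero0, zero_add, htele, hIco, hδ1]
    have hfin : D = ∑ t ∈ Finset.range T,
        (⟪gradient (fun v' => c t (xs t) v') (us t), d t⟫ + ⟪lam (t + 1), Df t (0, d t)⟫) := by
      rw [hstep1, Finset.sum_add_distrib]
      linarith [hxpart]
    rw [hfin]
    apply Finset.sum_eq_zero
    intro t ht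
    have htT := Finset.mem_range.mp ht
    rw [← hB t htT (d t), ← ContinuousLinearMap.adjoint_inner_left, ← inner_add_left,
      hstat t htT, inner_zero_left]
  -- conclude using convexity
  have hline_eq : ∀ s : ℝ, (AffineMap.lineMap us u : ℝ →ᵃ[ℝ] (ℕ → F)) s = w s := by
    intro s; funext t
    show s • (u - us) t + us t = us t + s • d t
    simp [hd]
    abel
  have hgconv : ConvexOn ℝ Set.univ g := by
    have hcc := hconv.comp_affineMap (AffineMap.lineMap us u)
    rw [Set.preimage_univ] at hcc
    have : (Φ ∘ (AffineMap.lineMap us u : ℝ →ᵃ[ℝ] (ℕ → F))) = g := by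
      funext s
      show Φ ((AffineMap.lineMap us u : ℝ →ᵃ[ℝ] (ℕ → F)) s) = Φ (w s)
      rw [hline_eq s]
    rwa [this] at hcc
  have hg0 : g 0 = Φ us := by
    show Φ (w 0) = Φ us
    congr 1
    funext t
    show us t + (0:ℝ) • d t = us t
    simp
  have hg1 : g 1 = Φ u := by
    show Φ (w 1) = Φ u
    congr 1
    funext t
    show us t + (1:ℝ) • d t = u t
    simp [hd]
  have := convex_line_min hgconv (hD0 ▸ hgderiv)
  rw [hg0, hg1] at this
  exact this


theorem shooting_fixed_point_iff_stationary_and_nash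
    (M T : ℕ) (hM : 1 ≤ M) (hT : 1 ≤ T) (γ : ℝ) (hγ : 0 < γ)
    (n mdim : Fin M → ℕ)
    (x0 : (i : Fin M) → EuclideanSpace ℝ (Fin (n i)))
    (N : Fin M → Finset (Fin M))
    (f : (i : Fin M) → ℕ → EuclideanSpace ℝ (Fin (n i)) →
      EuclideanSpace ℝ (Fin (mdim i)) → EuclideanSpace ℝ (Fin (n i)))
    (c : (i : Fin M) → ℕ → EuclideanSpace ℝ (Fin (n i)) →
      EuclideanSpace ℝ (Fin (mdim i)) →
      ((j : N i) → EuclideanSpace ℝ (Fin (n j.1))) → ℝ)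
    (h : (i : Fin M) → EuclideanSpace ℝ (Fin (n i)) →
      ((j : N i) → EuclideanSpace ℝ (Fin (n j.1))) → ℝ)
    -- continuous differentiability of the data
    (hf : ∀ i, ∀ t < T, ContDiff ℝ 1
      (fun p : EuclideanSpace ℝ (Fin (n i)) × EuclideanSpace ℝ (Fin (mdim i)) =>
        f i t p.1 p.2))
    (hc : ∀ i, ∀ t < T, ContDiff ℝ 1
      (fun p : EuclideanSpace ℝ (Fin (n i)) × EuclideanSpace ℝ (Fin (mdim i)) ×
          ((j : N i) → EuclideanSpace ℝ (Fin (n j.1))) =>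
        c i t p.1 p.2.1 p.2.2))
    (hh : ∀ i, ContDiff ℝ 1
      (fun p : EuclideanSpace ℝ (Fin (n i)) ×
          ((j : N i) → EuclideanSpace ℝ (Fin (n j.1))) =>
        h i p.1 p.2))
    -- the current profile of control sequences and its rollouts xᵢ
    (us : (i : Fin M) → ℕ → EuclideanSpace ℝ (Fin (mdim i)))
    (xs : (i : Fin M) → ℕ → EuclideanSpace ℝ (Fin (n i)))
    (hxs : ∀ i, GameFeasible T (x0 i) (f i) (xs i) (us i))
    -- the backward costate sequence λᵢ computed along the profile
    (lam : (i : Fin M) → ℕ → EuclideanSpace ℝ (Fin (n i)))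
    (hlamT : ∀ i, lam i T = gradient (fun y => h i y (fun j => xs j.1 T)) (xs i T))
    (hlamrec : ∀ i, ∀ t, 1 ≤ t → t < T →
      lam i t = gradient (fun y => c i t y (us i t) (fun j => xs j.1 t)) (xs i t)
        + (ContinuousLinearMap.adjoint
            (fderiv ℝ (fun y => f i t y (us i t)) (xs i t))) (lam i (t + 1)))
    -- the correction terms Δuᵢᵗ of the shooting algorithm
    (Δu : (i : Fin M) → ℕ → EuclideanSpace ℝ (Fin (mdim i)))
    (hΔu : ∀ i, ∀ t < T,
      Δu i t = gradient (fun v => c i t (xs i t) v (fun j => xs j.1 t)) (us i t)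
        + (ContinuousLinearMap.adjoint
            (fderiv ℝ (fun v => f i t (xs i t) v) (us i t))) (lam i (t + 1)))
    -- the rollout map and the reduced objectives Φᵢ against the profile
    (roll : (i : Fin M) → (ℕ → EuclideanSpace ℝ (Fin (mdim i))) → ℕ →
      EuclideanSpace ℝ (Fin (n i)))
    (hroll0 : ∀ i u, roll i u 0 = x0 i)
    (hrollrec : ∀ i u, ∀ t < T, roll i u (t + 1) = f i t (roll i u t) (u t))
    (Φ : (i : Fin M) → (ℕ → EuclideanSpace ℝ (Fin (mdim i))) → ℝ)
    (hΦ : ∀ i u, Φ i u =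
      (∑ t ∈ Finset.range T, c i t (roll i u t) (u t) (fun j => xs j.1 t))
        + h i (roll i u T) (fun j => xs j.1 T)) :
    -- (1) fixed point of the update uᵢ ← uᵢ − γ Δuᵢ iff PMP-G stationarity
    ((∀ i, ∀ t < T, us i t - γ • Δu i t = us i t) ↔ (∀ i, ∀ t < T, Δu i t = 0)) ∧
    -- (2) if moreover each Φᵢ is convex, a fixed point yields a Nash equilibrium
    ((∀ i, ConvexOn ℝ Set.univ (Φ i)) →
      (∀ i, ∀ t < T, us i t - γ • Δu i t = us i t) →
      ∀ i, ∀ (x : ℕ → EuclideanSpace ℝ (Fin (n i)))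
          (u : ℕ → EuclideanSpace ℝ (Fin (mdim i))),
        GameFeasible T (x0 i) (f i) x u →
          (∑ t ∈ Finset.range T, c i t (xs i t) (us i t) (fun j => xs j.1 t))
              + h i (xs i T) (fun j => xs j.1 T)
            ≤ (∑ t ∈ Finset.range T, c i t (x t) (u t) (fun j => xs j.1 t))
              + h i (x T) (fun j => xs j.1 T)) := by
  have part1 : (∀ i, ∀ t < T, us i t - γ • Δu i t = us i t) ↔ (∀ i, ∀ t < T, Δu i t = 0) := by
    constructor
    · intro hfix i t ht
      have h2 : γ • Δu i t = 0 := sub_eq_self.mp (hfix i t ht)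
      rcases smul_eq_zero.mp h2 with h3 | h3
      · exact absurd h3 (ne_of_gt hγ)
      · exact h3
    · intro hz i t ht
      rw [hz i t ht]
      simp
  refine ⟨part1, ?_⟩
  intro hconv hfix i x u hfeas
  have hstat' := part1.mp hfix
  have hrollx : ∀ t ≤ T, roll i u t = x t := by
    intro t
    induction t with
    | zero => intro _; rw [hroll0 i u, hfeas.1]
    | succ t ih =>
      intro ht1
      have ht : t < T := ht1
      rw [hrollrec i u t ht, hfeas.2 t ht, ih (le_of_lt ht)]
  have hrollus : ∀ t ≤ T, roll i (us i) t = xs i t := by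
    intro t
    induction t with
    | zero => intro _; rw [hroll0 i (us i), (hxs i).1]
    | succ t ih =>
      intro ht1
      have ht : t < T := ht1
      rw [hrollrec i (us i) t ht, (hxs i).2 t ht, ih (le_of_lt ht)]
  have main := shooting_stationary_min (E := EuclideanSpace ℝ (Fin (n i)))
    (F := EuclideanSpace ℝ (Fin (mdim i))) T hT (f i)
    (fun t y v => c i t y v (fun j => xs j.1 t))
    (fun y => h i y (fun j => xs j.1 T))
    (hf i)
    (fun t ht => (hc i t ht).comp
      (contDiff_fst.prodMk (contDiff_snd.prodMk contDiff_const)))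
    ((hh i).comp (contDiff_id.prodMk contDiff_const))
    (x0 i) (us i) (xs i) (hxs i).1 (hxs i).2
    (lam i) (hlamT i) (hlamrec i)
    (fun t ht => by
      have hz := hstat' i t ht
      rw [hΔu i t ht] at hz
      exact hz)
    (roll i) (hroll0 i) (hrollrec i)
    (Φ i) (hΦ i) (hconv i) u
  have hL : Φ i (us i)
      = (∑ t ∈ Finset.range T, c i t (xs i t) (us i t) (fun j => xs j.1 t))
        + h i (xs i T) (fun j => xs j.1 T) := by
    rw [hΦ i (us i), hrollus T le_rfl]
    congr 1
    apply Finset.sum_congr rfl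
    intro t ht
    rw [hrollus t (le_of_lt (Finset.mem_range.mp ht))]
  have hR : Φ i u
      = (∑ t ∈ Finset.range T, c i t (x t) (u t) (fun j => xs j.1 t))
        + h i (x T) (fun j => xs j.1 T) := by
    rw [hΦ i u, hrollx T le_rfl]
    congr 1
    apply Finset.sum_congr rfl
    intro t ht
    rw [hrollx t (le_of_lt (Finset.mem_range.mp ht))]
  rw [hL, hR] at main
  exact main
end
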